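/- In the group algebra ℂ[S_n], let X_m = (1 m) + (2 m) + ... + (m-1, m) be the Jucys–Murphy element. With P_{l,m}(x) as the non-backtracking Chebyshev-type polynomial P_{l,m}(x) = (m-1)^{l/2} U_l(x/(2√(m-1))) - (m-1)^{(l-2)/2} U_{l-2}(x/(2√(m-1))), one has P_{l,m-1}(X_m) = ∑_{p ∈ P_{l,m}} (j_1 m)(j_2 m)···(j_l m), where the sum runs over tuples p = (j_1,...,j_l) ∈ {1,...,m-1}^l with j_r ≠ j_{r+1} for all 1 ≤ r ≤ l-1. -/

import Mathlib

open Polynomial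

/-- Chebyshev polynomials of the second kind with the convention
`U_{-1} = U_{-2} = ⋯ = 0`. -/
noncomputable def chebyshevU' (R : Type*) [CommRing R] (k : ℤ) : R[X] :=
  if k < 0 then 0 else Polynomial.Chebyshev.U R k

/-- The non-backtracking Chebyshev-type polynomial
`P_{l,m}(x) = (m-1)^{l/2} U_l(x/(2√(m-1))) - (m-1)^{(l-2)/2} U_{l-2}(x/(2√(m-1)))`
(with `U_{-2} = U_{-1} = 0`). -/
noncomputable def nbPoly (l m : ℕ) : ℂ[X] :=
  C ((Real.sqrt ((m : ℝ) - 1) : ℂ) ^ l) *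
      (chebyshevU' ℂ l).comp (C (1 / (2 * (Real.sqrt ((m : ℝ) - 1) : ℂ))) * X) -
    C ((Real.sqrt ((m : ℝ) - 1) : ℂ) ^ (l - 2)) *
      (chebyshevU' ℂ ((l : ℤ) - 2)).comp (C (1 / (2 * (Real.sqrt ((m : ℝ) - 1) : ℂ))) * X)

namespace NBAux


noncomputable def Aaux (s : ℂ) (k : ℤ) : ℂ[X] :=
  C (s ^ k) * (chebyshevU' ℂ k).comp (C (1 / (2 * s)) * X)

lemma Aaux_neg (s : ℂ) (k : ℤ) (hk : k < 0) : Aaux s k = 0 := by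
  simp [Aaux, chebyshevU', hk]

lemma Aaux_zero (s : ℂ) : Aaux s 0 = 1 := by
  simp [Aaux, chebyshevU', Polynomial.Chebyshev.U_zero]

lemma Aaux_one (s : ℂ) (hs : s ≠ 0) : Aaux s 1 = X := by
  rw [Aaux, chebyshevU', if_neg (by omega), Polynomial.Chebyshev.U_one, mul_comp, X_comp,
    ofNat_comp, zpow_one]
  rw [← C_eq_natCast, ← mul_assoc, ← mul_assoc, ← C_mul, ← C_mul]
  rw [show s * (2:ℕ) * (1 / (2 * s)) = 1 from by field_simp; ring]
  rw [map_one, one_mul]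

lemma Aaux_rec (s : ℂ) (hs : s ≠ 0) (k : ℤ) (hk : -1 ≤ k) :
    Aaux s (k + 2) = X * Aaux s (k + 1) - C (s ^ (2:ℤ)) * Aaux s k := by
  rcases eq_or_lt_of_le hk with h | h
  · rw [← h]
    norm_num
    rw [Aaux_one s hs, Aaux_zero, Aaux_neg s _ (by norm_num)]
    ring
  · have hk0 : 0 ≤ k := by omega
    rw [Aaux, Aaux, Aaux, chebyshevU', chebyshevU', chebyshevU',
      if_neg (by omega), if_neg (by omega), if_neg (by omega),
      Polynomial.Chebyshev.U_add_two, sub_comp, mul_comp, mul_comp, ofNat_comp, X_comp]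
    set a := (Polynomial.Chebyshev.U ℂ (k + 1)).comp (C (1 / (2 * s)) * X) with ha
    set b := (Polynomial.Chebyshev.U ℂ k).comp (C (1 / (2 * s)) * X) with hb
    have e1 : C (s ^ (k + 2)) * ((2 : ℂ[X]) * C (1 / (2 * s))) = C (s ^ (k + 1)) := by
      rw [show ((2:ℂ[X])) = C 2 from (map_ofNat C 2).symm, ← C_mul, ← C_mul]
      congr 1
      have h2 : (2:ℂ) * (1 / (2 * s)) = s ^ (-1 : ℤ) := by
        rw [zpow_neg_one]
        field_simp
      rw [h2, ← zpow_add₀ hs]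
      congr 1
      omega
    have e2 : C (s ^ (k + 2)) = C (s ^ (2:ℤ)) * C (s ^ k) := by
      rw [← C_mul, ← zpow_add₀ hs]
      ring_nf
    linear_combination (X * a) * e1 - b * e2

lemma nbPoly_eq (l m : ℕ) :
    nbPoly l m = Aaux (Real.sqrt ((m : ℝ) - 1) : ℂ) l -
      Aaux (Real.sqrt ((m : ℝ) - 1) : ℂ) ((l : ℤ) - 2) := by
  rcases lt_or_ge l 2 with h | h
  · have h0 : chebyshevU' ℂ ((l:ℤ) - 2) = 0 := if_pos (by omega)
    rw [nbPoly, Aaux, Aaux, h0, zero_comp, mul_zero, mul_zero, zpow_natCast]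
  · rw [nbPoly, Aaux, Aaux, zpow_natCast, ← zpow_natCast _ (l - 2), Nat.cast_sub h]
    norm_num


lemma s_ne {m : ℕ} (hm : 2 ≤ m) : ((Real.sqrt ((m : ℝ) - 1) : ℂ)) ≠ 0 := by
  have h2 : (2:ℝ) ≤ (m:ℝ) := by exact_mod_cast hm
  have : (0:ℝ) < Real.sqrt ((m:ℝ) - 1) := Real.sqrt_pos.mpr (by linarith)
  exact Complex.ofReal_ne_zero.mpr (ne_of_gt this)

lemma s_sq {m : ℕ} (hm : 2 ≤ m) :
    ((Real.sqrt ((m : ℝ) - 1) : ℂ)) ^ (2:ℤ) = (m:ℂ) - 1 := by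
  have h2 : (2:ℝ) ≤ (m:ℝ) := by exact_mod_cast hm
  rw [zpow_two, ← Complex.ofReal_mul, Real.mul_self_sqrt (by linarith)]
  push_cast
  ring

lemma nbPoly_zero (m : ℕ) : nbPoly 0 m = 1 := by
  rw [nbPoly_eq]
  norm_num
  rw [Aaux_zero, Aaux_neg _ _ (by norm_num)]
  ring

lemma nbPoly_one {m : ℕ} (hm : 2 ≤ m) : nbPoly 1 m = X := by
  rw [nbPoly_eq]
  norm_num
  rw [Aaux_one _ (s_ne hm), Aaux_neg _ _ (by norm_num)]
  ring

lemma nbPoly_two {m : ℕ} (hm : 2 ≤ m) : nbPoly 2 m = X ^ 2 - C (m:ℂ) := by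
  rw [nbPoly_eq]
  norm_num
  have h := Aaux_rec _ (s_ne hm) 0 (by norm_num)
  norm_num at h
  rw [h, Aaux_one _ (s_ne hm), Aaux_zero, ← C_pow,
    (by rw [← s_sq hm]; simp : ((Real.sqrt ((m : ℝ) - 1) : ℂ)) ^ 2 = (m:ℂ) - 1), map_sub, map_one, C_eq_natCast]
  ring

lemma nbPoly_rec {m : ℕ} (hm : 2 ≤ m) (l : ℕ) :
    nbPoly (l + 3) m = X * nbPoly (l + 2) m - C ((m:ℂ) - 1) * nbPoly (l + 1) m := by
  have h1 := Aaux_rec _ (s_ne hm) ((l:ℤ) + 1) (by omega)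
  have h2 := Aaux_rec _ (s_ne hm) ((l:ℤ) - 1) (by omega)
  rw [s_sq hm] at h1 h2
  rw [nbPoly_eq, nbPoly_eq, nbPoly_eq]
  push_cast
  ring_nf
  ring_nf at h1 h2
  linear_combination h1 - h2



variable {n : ℕ}

def pprod (m : Fin n) {L : ℕ} (p : Fin L → Fin n) : Equiv.Perm (Fin n) :=
  (List.ofFn fun r : Fin L => Equiv.swap (p r) m).prod

def Cnd (m : Fin n) {L : ℕ} (p : Fin L → Fin n) : Prop :=
  (∀ r, p r < m) ∧ (∀ r t : Fin L, (t : ℕ) + 1 = (r : ℕ) → p r ≠ p t)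

open Classical in
noncomputable def NN (m : Fin n) (L : ℕ) : MonoidAlgebra ℂ (Equiv.Perm (Fin n)) :=
  ∑ p ∈ Finset.univ.filter (fun p : Fin L → Fin n =>
      (∀ r, p r < m) ∧ (∀ r t : Fin L, (t : ℕ) + 1 = (r : ℕ) → p r ≠ p t)),
    MonoidAlgebra.of ℂ (Equiv.Perm (Fin n))
      ((List.ofFn (fun r : Fin L => Equiv.swap (p r) m)).prod)

lemma NN_eq (m : Fin n) (L : ℕ) [DecidablePred (Cnd m (L := L))] :
    NN m L = ∑ p : Fin L → Fin n,
      if Cnd m p then MonoidAlgebra.of ℂ (Equiv.Perm (Fin n)) (pprod m p) else 0 := by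
  classical
  rw [NN, Finset.sum_filter]
  apply Finset.sum_congr rfl
  intro p _
  congr 1

lemma cons_prod (m : Fin n) {L : ℕ} (j : Fin n) (p : Fin L → Fin n) :
    pprod m (Fin.cons j p) = Equiv.swap j m * pprod m p := by
  simp [pprod, List.ofFn_succ, Fin.cons_zero, Fin.cons_succ]

lemma pprod_zero (m : Fin n) (p : Fin 0 → Fin n) : pprod m p = 1 := by
  simp [pprod]

lemma sum_cons {A : Type*} [AddCommMonoid A] {L : ℕ} (F : (Fin (L + 1) → Fin n) → A) :
    ∑ q : Fin (L + 1) → Fin n, F q = ∑ j : Fin n, ∑ p : Fin L → Fin n, F (Fin.cons j p) := by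
  rw [← (Fin.consEquiv fun _ => Fin n).sum_comp F, Fintype.sum_prod_type]
  rfl

lemma cnd_cons_iff {m : Fin n} {L : ℕ} (j : Fin n) (p : Fin (L + 1) → Fin n) :
    Cnd m (Fin.cons j p) ↔ (j < m ∧ Cnd m p ∧ p 0 ≠ j) := by
  unfold Cnd
  constructor
  · rintro ⟨hlt, hadj⟩
    refine ⟨?_, ⟨?_, ?_⟩, ?_⟩
    · have := hlt 0; rwa [Fin.cons_zero] at this
    · intro r; have := hlt r.succ; rwa [Fin.cons_succ] at this
    · intro r t h
      have := hadj r.succ t.succ (by simp only [Fin.val_succ]; omega)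
      rwa [Fin.cons_succ, Fin.cons_succ] at this
    · have := hadj (Fin.succ 0) 0 (by simp)
      rwa [Fin.cons_succ, Fin.cons_zero] at this
  · rintro ⟨hj, ⟨hlt, hadj⟩, h0⟩
    constructor
    · intro r
      refine Fin.cases ?_ (fun i => ?_) r
      · rwa [Fin.cons_zero]
      · rw [Fin.cons_succ]; exact hlt i
    · intro r t
      refine Fin.cases ?_ (fun t' => ?_) t
      · intro h
        have hr : r = Fin.succ 0 := by
          ext
          simp only [Fin.val_succ, Fin.val_zero] at h ⊢
          omega
        rw [hr, Fin.cons_succ, Fin.cons_zero]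
        exact h0
      · refine Fin.cases ?_ (fun r' => ?_) r <;> intro h
        · simp only [Fin.val_succ, Fin.val_zero] at h
          omega
        · rw [Fin.cons_succ, Fin.cons_succ]
          apply hadj
          simp only [Fin.val_succ] at h
          omega

lemma cnd_zero (m : Fin n) (p : Fin 0 → Fin n) : Cnd m p := by
  constructor
  · intro r; exact r.elim0
  · intro r t; exact r.elim0

lemma cnd_cons_zero_iff {m : Fin n} (j : Fin n) (p : Fin 0 → Fin n) :
    Cnd m (Fin.cons j p) ↔ j < m := by
  unfold Cnd
  constructor
  · rintro ⟨hlt, -⟩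
    have := hlt 0
    rwa [Fin.cons_zero] at this
  · intro hj
    constructor
    · intro r
      have hr : r = 0 := Fin.eq_zero r
      rw [hr, Fin.cons_zero]
      exact hj
    · intro r t h
      have := r.isLt
      have := t.isLt
      omega
  
lemma card_lt (m : Fin n) :
    (Finset.univ.filter fun j : Fin n => j < m).card = (m : ℕ) := by
  classical
  rw [show (Finset.univ.filter fun j : Fin n => j < m) = Finset.Iio m from by ext j; simp]
  exact Fin.card_Iio m

lemma card_lt_ne (m : Fin n) (a : Fin n) (ha : a < m) :
    (Finset.univ.filter fun j : Fin n => j < m ∧ a ≠ j).card = (m : ℕ) - 1 := by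
  classical
  rw [show (Finset.univ.filter fun j : Fin n => j < m ∧ a ≠ j)
      = (Finset.univ.filter fun j : Fin n => j < m).erase a from by
    ext j
    simp only [Finset.mem_erase, Finset.mem_filter, Finset.mem_univ, true_and]
    tauto]
  rw [Finset.card_erase_of_mem (by simp [ha]), card_lt]

lemma NN_zero (m : Fin n) : NN m 0 = 1 := by
  classical
  rw [NN_eq]
  rw [Fintype.sum_unique]
  rw [if_pos (cnd_zero m _), pprod_zero, map_one]

lemma NN_one (m : Fin n) : NN m 1 =
    ∑ j ∈ Finset.univ.filter (fun j : Fin n => j < m),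
      MonoidAlgebra.of ℂ (Equiv.Perm (Fin n)) (Equiv.swap j m) := by
  classical
  rw [NN_eq, Finset.sum_filter]
  rw [sum_cons (fun p : Fin 1 → Fin n =>
    if Cnd m p then MonoidAlgebra.of ℂ (Equiv.Perm (Fin n)) (pprod m p) else 0)]
  apply Finset.sum_congr rfl
  intro j _
  rw [Fintype.sum_unique]
  by_cases hj : j < m
  · rw [if_pos (by rwa [cnd_cons_zero_iff]), if_pos hj]
    rw [cons_prod, pprod_zero, mul_one]
  · rw [if_neg (by rwa [cnd_cons_zero_iff]), if_neg hj]

lemma swap_cancel (m : Fin n) {L : ℕ} (p : Fin (L + 1) → Fin n) :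
    Equiv.swap (p 0) m * pprod m p = pprod m (Fin.tail p) := by
  have h : pprod m p = Equiv.swap (p 0) m * pprod m (Fin.tail p) := by
    conv_lhs => rw [← Fin.cons_self_tail p]
    rw [cons_prod]
  rw [h, ← mul_assoc, Equiv.swap_mul_self, one_mul]

open Classical in
lemma step_main (m : Fin n) (Xm : MonoidAlgebra ℂ (Equiv.Perm (Fin n)))
    (hXm : Xm = ∑ j ∈ Finset.univ.filter (fun j : Fin n => j < m),
      MonoidAlgebra.of ℂ (Equiv.Perm (Fin n)) (Equiv.swap j m)) (L : ℕ) :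
    Xm * NN m (L + 1) = NN m (L + 2) +
      ∑ p : Fin (L + 1) → Fin n,
        (if Cnd m p then MonoidAlgebra.of ℂ (Equiv.Perm (Fin n)) (pprod m (Fin.tail p)) else 0) := by
  classical
  have hX : Xm = ∑ j : Fin n,
      (if j < m then MonoidAlgebra.of ℂ (Equiv.Perm (Fin n)) (Equiv.swap j m) else 0) := by
    rw [hXm, Finset.sum_filter]
  rw [hX, NN_eq, NN_eq, Finset.sum_mul_sum]
  have key : ∀ (j : Fin n) (p : Fin (L + 1) → Fin n),
      (if j < m then MonoidAlgebra.of ℂ (Equiv.Perm (Fin n)) (Equiv.swap j m) else 0) *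
        (if Cnd m p then MonoidAlgebra.of ℂ (Equiv.Perm (Fin n)) (pprod m p) else 0)
      = (if Cnd m (Fin.cons j p) then
            MonoidAlgebra.of ℂ (Equiv.Perm (Fin n)) (pprod m (Fin.cons j p)) else 0)
        + (if (Cnd m p ∧ p 0 = j) then
            MonoidAlgebra.of ℂ (Equiv.Perm (Fin n)) (pprod m (Fin.tail p)) else 0) := by
    intro j p
    by_cases h1 : j < m
    · by_cases h2 : Cnd m p
      · by_cases h3 : p 0 = j
        · have h5 : ¬ Cnd m (Fin.cons j p) := by rw [cnd_cons_iff]; tauto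
          rw [if_pos h1, if_pos h2, if_neg h5, if_pos ⟨h2, h3⟩,
            zero_add, ← map_mul, ← h3, swap_cancel]
        · have h5 : Cnd m (Fin.cons j p) := by rw [cnd_cons_iff]; exact ⟨h1, h2, h3⟩
          have h4 : ¬ (Cnd m p ∧ p 0 = j) := by tauto
          rw [if_pos h1, if_pos h2, if_pos h5, if_neg h4, add_zero, ← map_mul, cons_prod]
      · have h5 : ¬ Cnd m (Fin.cons j p) := by rw [cnd_cons_iff]; tauto
        have h4 : ¬ (Cnd m p ∧ p 0 = j) := by tauto
        rw [if_pos h1, if_neg h2, if_neg h5, if_neg h4, mul_zero, add_zero]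
    · have h4 : ¬ (Cnd m p ∧ p 0 = j) := by
        rintro ⟨h2, h3⟩
        exact h1 (h3 ▸ h2.1 0)
      have h5 : ¬ Cnd m (Fin.cons j p) := by rw [cnd_cons_iff]; tauto
      rw [if_neg h1, if_neg h5, if_neg h4, zero_mul, add_zero]
  simp_rw [key]
  simp_rw [Finset.sum_add_distrib]
  congr 1
  · exact (sum_cons (fun q : Fin (L + 2) → Fin n =>
      if Cnd m q then MonoidAlgebra.of ℂ (Equiv.Perm (Fin n)) (pprod m q) else 0)).symm
  · rw [Finset.sum_comm]
    apply Finset.sum_congr rfl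
    intro p _
    by_cases h2 : Cnd m p
    · rw [if_pos h2]
      rw [Finset.sum_eq_single (p 0)]
      · rw [if_pos ⟨h2, rfl⟩]
      · intro j _ hj
        rw [if_neg (by rintro ⟨-, h⟩; exact hj h.symm)]
      · intro h
        exact absurd (Finset.mem_univ _) h
    · rw [if_neg h2]
      apply Finset.sum_eq_zero
      intro j _
      rw [if_neg (by tauto)]

open Classical in
lemma tail_sum_one (m : Fin n) :
    ∑ p : Fin 1 → Fin n,
      (if Cnd m p then MonoidAlgebra.of ℂ (Equiv.Perm (Fin n)) (pprod m (Fin.tail p)) else 0)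
    = (m : ℕ) • (1 : MonoidAlgebra ℂ (Equiv.Perm (Fin n))) := by
  have h1 : ∀ p : Fin 1 → Fin n, pprod m (Fin.tail p) = 1 := fun p => pprod_zero m _
  simp_rw [h1, map_one]
  rw [sum_cons (fun p : Fin 1 → Fin n => if Cnd m p then (1 : MonoidAlgebra ℂ (Equiv.Perm (Fin n))) else 0)]
  simp_rw [Fintype.sum_unique]
  simp_rw [cnd_cons_zero_iff]
  rw [← Finset.sum_filter, Finset.sum_const, card_lt]

open Classical in
lemma tail_sum_succ (m : Fin n) (L : ℕ) :
    ∑ p : Fin (L + 2) → Fin n,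
      (if Cnd m p then MonoidAlgebra.of ℂ (Equiv.Perm (Fin n)) (pprod m (Fin.tail p)) else 0)
    = ((m : ℕ) - 1) • NN m (L + 1) := by
  rw [sum_cons (fun p : Fin (L + 2) → Fin n =>
    if Cnd m p then MonoidAlgebra.of ℂ (Equiv.Perm (Fin n)) (pprod m (Fin.tail p)) else 0)]
  simp_rw [Fin.tail_cons, cnd_cons_iff]
  rw [Finset.sum_comm, NN_eq, Finset.smul_sum]
  apply Finset.sum_congr rfl
  intro p _
  by_cases h2 : Cnd m p
  · rw [if_pos h2]
    have : ∀ j : Fin n, (if j < m ∧ Cnd m p ∧ p 0 ≠ j then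
        MonoidAlgebra.of ℂ (Equiv.Perm (Fin n)) (pprod m p) else 0)
      = (if j < m ∧ p 0 ≠ j then MonoidAlgebra.of ℂ (Equiv.Perm (Fin n)) (pprod m p) else 0) := by
      intro j
      by_cases hj : j < m ∧ p 0 ≠ j
      · rw [if_pos ⟨hj.1, h2, hj.2⟩, if_pos hj]
      · rw [if_neg (by tauto), if_neg hj]
    simp_rw [this]
    rw [← Finset.sum_filter, Finset.sum_const, card_lt_ne m (p 0) (h2.1 0)]
  · rw [if_neg h2]
    rw [smul_zero]
    apply Finset.sum_eq_zero
    intro j _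
    rw [if_neg (by tauto)]

end NBAux

open Classical in
/-- In `ℂ[S_n]`, with `X_m` the Jucys–Murphy element (the sum
of the transpositions `(j m)` over the elements `j` preceding `m`; elements of
`S_n` are zero-based here, so `m` stands for the one-based index `m + 1`), one
has `P_{l,m-1}(X_m) = ∑_p (j_1 m)(j_2 m)⋯(j_l m)`, the sum running over tuples
`(j_1, …, j_l)` of elements preceding `m` with `j_r ≠ j_{r+1}` for all `r`. -/
theorem nbPoly_jucysMurphy_eq_sum_paths
    (n : ℕ) (m : Fin n) (hm : 2 ≤ (m : ℕ)) (l : ℕ)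
    (Xm : MonoidAlgebra ℂ (Equiv.Perm (Fin n)))
    (hXm : Xm = ∑ j ∈ Finset.univ.filter (fun j : Fin n => j < m),
      MonoidAlgebra.of ℂ (Equiv.Perm (Fin n)) (Equiv.swap j m)) :
    Polynomial.aeval Xm (nbPoly l (m : ℕ)) =
      ∑ p ∈ Finset.univ.filter (fun p : Fin l → Fin n =>
          (∀ r, p r < m) ∧
          (∀ r t : Fin l, (t : ℕ) + 1 = (r : ℕ) → p r ≠ p t)),
        MonoidAlgebra.of ℂ (Equiv.Perm (Fin n))
          ((List.ofFn (fun r : Fin l => Equiv.swap (p r) m)).prod) := by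
  classical
  show Polynomial.aeval Xm (nbPoly l (m : ℕ)) = NBAux.NN m l
  have hc : ∀ c : ℂ, c • (1 : MonoidAlgebra ℂ (Equiv.Perm (Fin n)))
      = algebraMap ℂ (MonoidAlgebra ℂ (Equiv.Perm (Fin n))) c := fun c =>
    (Algebra.algebraMap_eq_smul_one c).symm
  have key : ∀ k : ℕ,
      (Polynomial.aeval Xm (nbPoly k (m : ℕ)) = NBAux.NN m k) ∧
      (Polynomial.aeval Xm (nbPoly (k + 1) (m : ℕ)) = NBAux.NN m (k + 1)) := by
    intro k
    induction k with
    | zero =>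
      constructor
      · rw [NBAux.nbPoly_zero, map_one, NBAux.NN_zero]
      · rw [NBAux.nbPoly_one hm, Polynomial.aeval_X, NBAux.NN_one m, ← hXm]
    | succ k ih =>
      refine ⟨ih.2, ?_⟩
      rcases k with _ | k'
      · -- the case of degree 2
        show Polynomial.aeval Xm (nbPoly 2 (m : ℕ)) = NBAux.NN m 2
        rw [NBAux.nbPoly_two hm, map_sub, map_pow, Polynomial.aeval_X, Polynomial.aeval_C]
        have hK1 := NBAux.step_main m Xm hXm 0
        rw [NBAux.tail_sum_one] at hK1
        have h1 : NBAux.NN m (0 + 1) = Xm := by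
          rw [show (0:ℕ) + 1 = 1 from rfl, NBAux.NN_one m, ← hXm]
        rw [h1, show (0:ℕ) + 2 = 2 from rfl] at hK1
        rw [pow_two, hK1]
        rw [show ((m:ℕ) • (1 : MonoidAlgebra ℂ (Equiv.Perm (Fin n))))
            = (((m:ℕ):ℂ)) • (1 : MonoidAlgebra ℂ (Equiv.Perm (Fin n))) from
          (Nat.cast_smul_eq_nsmul ℂ _ _).symm, hc, add_sub_cancel_right]
      · -- the inductive step
        show Polynomial.aeval Xm (nbPoly (k' + 3) (m : ℕ)) = NBAux.NN m (k' + 3)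
        have ih1 := ih.1
        have ih2 := ih.2
        rw [show k' + 1 + 1 = k' + 2 from rfl] at ih2
        rw [NBAux.nbPoly_rec hm k', map_sub, map_mul, map_mul, Polynomial.aeval_X,
          Polynomial.aeval_C, ih1, ih2]
        have hK2 : Xm * NBAux.NN m (k' + 2) = NBAux.NN m (k' + 3) +
            ∑ p : Fin (k' + 2) → Fin n,
              (if NBAux.Cnd m p then
                MonoidAlgebra.of ℂ (Equiv.Perm (Fin n)) (NBAux.pprod m (Fin.tail p)) else 0) :=
          NBAux.step_main m Xm hXm (k' + 1)
        rw [NBAux.tail_sum_succ m k'] at hK2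
        have hsm : (((m:ℕ) - 1) • NBAux.NN m (k' + 1))
            = (((m:ℂ) - 1)) • NBAux.NN m (k' + 1) := by
          rw [← Nat.cast_smul_eq_nsmul ℂ]
          congr 1
          have : 1 ≤ (m:ℕ) := by omega
          push_cast [Nat.cast_sub this]
          ring
        rw [hsm] at hK2
        rw [hK2, Algebra.smul_def, add_sub_cancel_right]
  exact (key l).1
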